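/- arXiv:2405.19170 — 2 statements merged into one kernel-verified Lean document; each statement's English description precedes it below -/
import Mathlib

section
/- For every ε > 0 and every d ∈ ℕ, the Gaussian kernel k(x, x') = exp(−ε² ‖x − x'‖²) on ℝ^d is strictly positive definite: for every N ∈ ℕ and all pairwise distinct points x_1, …, x_N ∈ ℝ^d, the matrix (exp(−ε² ‖x_i − x_j‖²))_{i,j=1}^N is symmetric positive definite. -/
open Polynomial in
lemma gaussian_aux_exists_sep {d N : ℕ} (x : Fin N → EuclideanSpace ℝ (Fin d))
    (hinj : Function.Injective x) :
    ∃ y : Fin d → ℝ, Function.Injective fun i => ∑ k, x i k * y k := by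
  classical
  set P : Fin N → Polynomial ℝ := fun i => ∑ k, Polynomial.C (x i k) * Polynomial.X ^ ((k : ℕ) + 1)
    with hPdef
  have coeffP : ∀ i (k : Fin d), (P i).coeff ((k : ℕ) + 1) = x i k := by
    intro i k
    simp only [hPdef, Polynomial.finset_sum_coeff, Polynomial.coeff_C_mul,
      Polynomial.coeff_X_pow]
    rw [Finset.sum_eq_single k]
    · simp
    · intro b _ hb
      have : ¬((k : ℕ) + 1 = (b : ℕ) + 1) := by
        simp only [add_left_inj]
        exact fun h => hb (Fin.ext h.symm)
      simp [this, Fin.val_inj, hb.symm]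
    · simp
  have hP : ∀ i j, i ≠ j → P i - P j ≠ 0 := by
    intro i j hij hz
    apply hij
    apply hinj
    have hx : ∀ k : Fin d, x i k = x j k := by
      intro k
      have := congrArg (fun p => Polynomial.coeff p ((k : ℕ) + 1)) hz
      simpa [coeffP, sub_eq_zero] using this
    exact congrArg (WithLp.toLp 2) (_root_.funext hx)
  set q : Polynomial ℝ := ∏ p ∈ Finset.univ.offDiag, (P p.1 - P p.2) with hq
  have hq0 : q ≠ 0 :=
    Finset.prod_ne_zero_iff.mpr fun p hp => hP _ _ (Finset.mem_offDiag.mp hp).2.2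
  obtain ⟨t, ht⟩ : ∃ t, q.eval t ≠ 0 := by
    by_contra h
    push_neg at h
    exact hq0 (Polynomial.zero_of_eval_zero q h)
  refine ⟨fun k => t ^ ((k : ℕ) + 1), ?_⟩
  intro i j hij
  by_contra hne
  have hmem : (i, j) ∈ Finset.univ.offDiag := by
    simp [Finset.mem_offDiag, hne]
  have hevalP : ∀ i, (P i).eval t = ∑ k, x i k * t ^ ((k : ℕ) + 1) := by
    intro i; simp [hPdef, Polynomial.eval_finset_sum]
  have : (P i - P j).eval t = 0 := by
    simp only [Polynomial.eval_sub, sub_eq_zero, hevalP]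
    exact hij
  exact ht (by rw [hq, Polynomial.eval_prod]; exact Finset.prod_eq_zero hmem this)

/-- The Gaussian kernel `k(x,x') = exp(-ε² ‖x - x'‖²)` on `ℝ^d` is
strictly positive definite: for all `N` and pairwise distinct points `x_1, …, x_N`,
the kernel matrix is (symmetric) positive definite. -/
theorem gaussian_kernel_strictly_positive_definite
    (ε : ℝ) (hε : 0 < ε) (d N : ℕ)
    (x : Fin N → EuclideanSpace ℝ (Fin d)) (hinj : Function.Injective x) :
    (Matrix.of fun i j => Real.exp (-(ε ^ 2) * ‖x i - x j‖ ^ 2)).PosDef := by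
  classical
  have exp_tsum : ∀ z : ℝ, Real.exp z = ∑' n : ℕ, z ^ n / n.factorial := by
    intro z
    rw [Real.exp_eq_exp_ℝ, NormedSpace.exp_eq_tsum_div]
  rw [Matrix.posDef_iff_dotProduct_mulVec]
  constructor
  · ext i j
    simp only [Matrix.conjTranspose_apply, Matrix.of_apply, star_trivial]
    rw [norm_sub_rev]
  · intro v hv
    obtain ⟨y, hy⟩ := gaussian_aux_exists_sep x hinj
    set c : ℝ := 2 * ε ^ 2 with hc
    have hc0 : 0 < c := by positivity
    set w : Fin N → ℝ := fun i => v i * Real.exp (-(ε ^ 2) * ‖x i‖ ^ 2) with hwdef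
    set u : Fin N → Fin N → ℝ := fun i j => ∑ k, x i k * x j k with hudef
    set A : (n : ℕ) → Fin N → (Fin n → Fin d) → ℝ := fun n i f => ∏ m, x i (f m) with hAdef
    set S : (n : ℕ) → (Fin n → Fin d) → ℝ := fun n f => ∑ i, w i * A n i f with hSdef
    set F : Fin N × Fin N → ℕ → ℝ :=
      fun p n => w p.1 * w p.2 * ((c * u p.1 p.2) ^ n / n.factorial) with hFdef
    set g : ℕ → ℝ := fun n => (c ^ n / n.factorial) * ∑ f : Fin n → Fin d, (S n f) ^ 2 with hgdef
    have hFsummable : ∀ p : Fin N × Fin N, Summable (F p) := fun p =>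
      (Real.summable_pow_div_factorial _).mul_left _
    have inner_eq : ∀ a b : EuclideanSpace ℝ (Fin d),
        (inner ℝ a b : ℝ) = ∑ k, a k * b k := by
      intro a b
      simp [PiLp.inner_apply, RCLike.inner_apply, mul_comm]
    have entry : ∀ i j, v i * (Real.exp (-(ε ^ 2) * ‖x i - x j‖ ^ 2) * v j)
        = ∑' n, F (i, j) n := by
      intro i j
      have hdist : ‖x i - x j‖ ^ 2 = ‖x i‖ ^ 2 - 2 * u i j + ‖x j‖ ^ 2 := by
        rw [norm_sub_sq_real, inner_eq]
      have hsplit : -(ε ^ 2) * ‖x i - x j‖ ^ 2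
          = (-(ε ^ 2) * ‖x i‖ ^ 2) + (c * u i j) + (-(ε ^ 2) * ‖x j‖ ^ 2) := by
        rw [hdist, hc]; ring
      calc v i * (Real.exp (-(ε ^ 2) * ‖x i - x j‖ ^ 2) * v j)
          = (w i * w j) * Real.exp (c * u i j) := by
            rw [hsplit, Real.exp_add, Real.exp_add, hwdef]; ring
        _ = ∑' n, F (i, j) n := by
            rw [exp_tsum (c * u i j), ← tsum_mul_left]
    have quad : dotProduct (star v) ((Matrix.of fun i j =>
          Real.exp (-(ε ^ 2) * ‖x i - x j‖ ^ 2)).mulVec v)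
        = ∑ p : Fin N × Fin N, ∑' n, F p n := by
      calc dotProduct (star v) ((Matrix.of fun i j => Real.exp (-(ε ^ 2) * ‖x i - x j‖ ^ 2)).mulVec v)
          = ∑ i, ∑ j, v i * (Real.exp (-(ε ^ 2) * ‖x i - x j‖ ^ 2) * v j) := by
            simp [dotProduct, Matrix.mulVec, Finset.mul_sum]
        _ = ∑ i, ∑ j, ∑' n, F (i, j) n := by
            exact Finset.sum_congr rfl fun i _ => Finset.sum_congr rfl fun j _ => entry i j
        _ = ∑ p : Fin N × Fin N, ∑' n, F p n := (Fintype.sum_prod_type' (f := fun i j => ∑' n, F (i, j) n)).symm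
    have interchange : ∑ p : Fin N × Fin N, ∑' n, F p n = ∑' n, ∑ p : Fin N × Fin N, F p n :=
      (Summable.tsum_finsetSum fun p _ => hFsummable p).symm
    have hu_pow : ∀ (n : ℕ) i j, u i j ^ n = ∑ f : Fin n → Fin d, A n i f * A n j f := by
      intro n i j
      rw [hudef]
      rw [Finset.sum_pow' Finset.univ (fun k => x i k * x j k) n, Fintype.piFinset_univ]
      exact Finset.sum_congr rfl fun f _ => by
        rw [hAdef, ← Finset.prod_mul_distrib]
    have pern : ∀ n : ℕ, ∑ p : Fin N × Fin N, F p n = g n := by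
      intro n
      calc ∑ p : Fin N × Fin N, F p n
          = ∑ i, ∑ j, (c ^ n / n.factorial) * (w i * w j * u i j ^ n) := by
            rw [Fintype.sum_prod_type]
            exact Finset.sum_congr rfl fun i _ => Finset.sum_congr rfl fun j _ => by
              simp only [hFdef, mul_pow]; ring
        _ = (c ^ n / n.factorial) * ∑ i, ∑ j, w i * w j * u i j ^ n := by
            simp_rw [← Finset.mul_sum]
        _ = g n := by
            rw [hgdef]
            congr 1
            calc ∑ i, ∑ j, w i * w j * u i j ^ n
                = ∑ i, ∑ j, ∑ f : Fin n → Fin d, (w i * A n i f) * (w j * A n j f) := by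
                  refine Finset.sum_congr rfl fun i _ => Finset.sum_congr rfl fun j _ => ?_
                  rw [hu_pow n i j, Finset.mul_sum]
                  exact Finset.sum_congr rfl fun f _ => by ring
              _ = ∑ i, ∑ f : Fin n → Fin d, ∑ j, (w i * A n i f) * (w j * A n j f) :=
                  Finset.sum_congr rfl fun i _ => Finset.sum_comm
              _ = ∑ f : Fin n → Fin d, ∑ i, ∑ j, (w i * A n i f) * (w j * A n j f) :=
                  Finset.sum_comm
              _ = ∑ f : Fin n → Fin d, (S n f) ^ 2 := by
                  refine Finset.sum_congr rfl fun f _ => ?_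
                  rw [sq, hSdef, Finset.sum_mul_sum]
    have hg0 : ∀ n, 0 ≤ g n := fun n =>
      mul_nonneg (by positivity) (Finset.sum_nonneg fun f _ => sq_nonneg _)
    have hgsum : Summable g :=
      (summable_sum fun p _ => hFsummable p).congr pern
    have hex : ∃ n f, S n f ≠ 0 := by
      by_contra h
      push_neg at h
      have hwv : ∀ n : ℕ, ∑ i, w i * (∑ k, x i k * y k) ^ n = 0 := by
        intro n
        calc ∑ i, w i * (∑ k, x i k * y k) ^ n
            = ∑ i, ∑ f : Fin n → Fin d, (∏ m, y (f m)) * (w i * A n i f) := by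
              refine Finset.sum_congr rfl fun i _ => ?_
              rw [Finset.sum_pow' Finset.univ (fun k => x i k * y k) n, Fintype.piFinset_univ,
                Finset.mul_sum]
              refine Finset.sum_congr rfl fun f _ => ?_
              show w i * ∏ m, (x i (f m) * y (f m)) = (∏ m, y (f m)) * (w i * ∏ m, x i (f m))
              rw [Finset.prod_mul_distrib]
              ring
          _ = ∑ f : Fin n → Fin d, (∏ m, y (f m)) * S n f := by
              rw [Finset.sum_comm]
              refine Finset.sum_congr rfl fun f _ => ?_
              rw [hSdef, Finset.mul_sum]
          _ = 0 := by simp [h]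
      have hw0 : w = 0 :=
        Matrix.eq_zero_of_forall_pow_sum_mul_pow_eq_zero hy fun i => hwv (i : ℕ)
      apply hv
      funext i
      have hwi := congrFun hw0 i
      simp only [hwdef, Pi.zero_apply] at hwi
      have hexp : Real.exp (-(ε ^ 2) * ‖x i‖ ^ 2) ≠ 0 := Real.exp_ne_zero _
      exact (mul_eq_zero.mp hwi).resolve_right hexp
    obtain ⟨n0, f0, hf0⟩ := hex
    have hgpos : 0 < g n0 :=
      mul_pos (by positivity)
        (Finset.sum_pos' (fun f _ => sq_nonneg _)
          ⟨f0, Finset.mem_univ _, pow_two_pos_of_ne_zero hf0⟩)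
    rw [quad, interchange, tsum_congr pern]
    exact Summable.tsum_pos hgsum hg0 n0 hgpos
end

section
/- For every ε > 0 and every d ∈ ℕ, the Matérn 1 kernel k(x, x') = (1 + ε ‖x − x'‖) exp(−ε ‖x − x'‖) on ℝ^d is strictly positive definite: for every N ∈ ℕ and all pairwise distinct points x_1, …, x_N ∈ ℝ^d, the matrix ((1 + ε ‖x_i − x_j‖) exp(−ε ‖x_i − x_j‖))_{i,j=1}^N is symmetric positive definite. -/
section comb
open Real Finset

section gauss
variable {d N : ℕ}

/-- Key algebraic induction: products of affine forms are killed. -/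
lemma claimD (x : Fin N → EuclideanSpace ℝ (Fin d)) (dd : Fin N → ℝ)
    (hT : ∀ (n : ℕ) (g : Fin n → Fin d), ∑ i, dd i * ∏ m, x i (g m) = 0)
    (u : Finset (Fin N)) (w : Fin N → Fin d → ℝ) (b : Fin N → ℝ) :
    ∀ s : Multiset (Fin d),
      ∑ i, dd i * (s.map (fun k => x i k)).prod
        * ∏ j ∈ u, ((∑ m, w j m * x i m) + b j) = 0 := by
  classical
  have hCM : ∀ s : Multiset (Fin d), ∑ i, dd i * (s.map (fun k => x i k)).prod = 0 := by
    intro s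
    have hs : (s.toList : Multiset (Fin d)) = s := Multiset.coe_toList s
    have hp : ∀ i, (s.map (fun k => x i k)).prod
        = ∏ m : Fin s.toList.length, x i (s.toList.get m) := by
      intro i
      have h1 : (List.ofFn (fun m => x i (s.toList.get m)))
          = s.toList.map (fun k => x i k) := by
        have := List.map_ofFn (f := s.toList.get) (g := fun k => x i k)
        rw [List.ofFn_get] at this
        simpa using this.symm
      calc (s.map (fun k => x i k)).prod
          = ((s.toList : Multiset (Fin d)).map (fun k => x i k)).prod := by rw [hs]
        _ = (s.toList.map (fun k => x i k)).prod := by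
              rw [Multiset.map_coe, Multiset.prod_coe]
        _ = (List.ofFn (fun m => x i (s.toList.get m))).prod := by rw [h1]
        _ = ∏ m : Fin s.toList.length, x i (s.toList.get m) := List.prod_ofFn
    simp_rw [hp]
    exact hT _ _
  induction u using Finset.induction_on with
  | empty => intro s; simpa using hCM s
  | insert j u hj ih =>
    intro s
    have expand : ∀ i : Fin N,
        dd i * (s.map (fun k => x i k)).prod
          * ∏ j' ∈ insert j u, ((∑ m, w j' m * x i m) + b j')
        = (∑ m, w j m * (dd i * ((m ::ₘ s).map (fun k => x i k)).prod
            * ∏ j' ∈ u, ((∑ m', w j' m' * x i m') + b j')))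
          + b j * (dd i * (s.map (fun k => x i k)).prod
            * ∏ j' ∈ u, ((∑ m', w j' m' * x i m') + b j')) := by
      intro i
      rw [Finset.prod_insert hj]
      simp only [Multiset.map_cons, Multiset.prod_cons]
      set S := (s.map (fun k => x i k)).prod with hS
      set P := ∏ j' ∈ u, ((∑ m', w j' m' * x i m') + b j') with hP
      have step1 : dd i * S * (((∑ m, w j m * x i m) + b j) * P)
          = (∑ m, w j m * x i m) * (dd i * S * P) + b j * (dd i * S * P) := by ring
      rw [step1, Finset.sum_mul]
      congr 1
      exact Finset.sum_congr rfl (fun m _ => by ring)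
    rw [Finset.sum_congr rfl (fun i _ => expand i), Finset.sum_add_distrib]
    rw [Finset.sum_comm]
    have h1 : ∀ m : Fin d, ∑ i, w j m * (dd i * ((m ::ₘ s).map (fun k => x i k)).prod
        * ∏ j' ∈ u, ((∑ m', w j' m' * x i m') + b j'))
        = w j m * ∑ i, dd i * ((m ::ₘ s).map (fun k => x i k)).prod
            * ∏ j' ∈ u, ((∑ m', w j' m' * x i m') + b j') := by
      intro m; rw [Finset.mul_sum]
    simp_rw [h1, ih, ← Finset.mul_sum, ih]
    simp

end gauss

lemma gauss_pd (x : Fin N → EuclideanSpace ℝ (Fin d)) (hinj : Function.Injective x)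
    {a : ℝ} (ha : 0 < a) {c : Fin N → ℝ} (hc : c ≠ 0) :
    0 < ∑ i, ∑ j, c i * c j * Real.exp (-(a * ‖x i - x j‖ ^ 2)) := by
  classical
  set D : Fin N → Fin N → ℝ := fun i j => ∑ k, x i k * x j k with hD
  set P : Fin N → ℝ := fun i => ∑ k, x i k * x i k with hP
  have hnorm : ∀ i j, ‖x i - x j‖ ^ 2 = P i - 2 * D i j + P j := by
    intro i j
    rw [EuclideanSpace.norm_eq, Real.sq_sqrt (by positivity)]
    simp only [PiLp.sub_apply, Real.norm_eq_abs, sq_abs]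
    have h1 : ∀ k, (x i k - x j k) ^ 2
        = x i k * x i k - 2 * (x i k * x j k) + x j k * x j k := fun k => by ring
    simp_rw [h1]
    rw [Finset.sum_add_distrib, Finset.sum_sub_distrib, ← Finset.mul_sum]
  set dd : Fin N → ℝ := fun i => c i * Real.exp (-(a * P i)) with hdd_def
  have hdd : ∀ i j, c i * c j * Real.exp (-(a * ‖x i - x j‖ ^ 2))
      = dd i * dd j * Real.exp (2 * a * D i j) := by
    intro i j
    rw [hnorm, show -(a * (P i - 2 * D i j + P j))
      = -(a * P i) + (-(a * P j) + 2 * a * D i j) by ring, Real.exp_add, Real.exp_add]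
    simp only [hdd_def]
    ring
  simp_rw [hdd]
  set T : (n : ℕ) → (Fin n → Fin d) → ℝ := fun n g => ∑ i, dd i * ∏ m, x i (g m) with hT_def
  set u : ℕ → ℝ := fun n => (2 * a) ^ n / n.factorial
      * ∑ g : Fin n → Fin d, (T n g) ^ 2 with hu_def
  have hT_apply : ∀ (n : ℕ) (g : Fin n → Fin d), T n g = ∑ i, dd i * ∏ m, x i (g m) :=
    fun n g => rfl
  have hu_apply : ∀ n : ℕ, u n = (2 * a) ^ n / n.factorial
      * ∑ g : Fin n → Fin d, (T n g) ^ 2 := fun n => rfl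
  have hsumm : ∀ i j : Fin N,
      Summable (fun n : ℕ => dd i * dd j * ((2 * a * D i j) ^ n / n.factorial)) :=
    fun i j => (Real.summable_pow_div_factorial _).mul_left _
  have hexp : ∀ y : ℝ, Real.exp y = ∑' n : ℕ, y ^ n / n.factorial := by
    intro y
    rw [Real.exp_eq_exp_ℝ, NormedSpace.exp_eq_tsum_div]
  have inner : ∀ n : ℕ, (∑ i, ∑ j, dd i * dd j * ((2 * a * D i j) ^ n / n.factorial)) = u n := by
    intro n
    have hDpow : ∀ i j : Fin N,
        (D i j) ^ n = ∑ g : Fin n → Fin d, (∏ m, x i (g m)) * (∏ m, x j (g m)) := by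
      intro i j
      have h0 : D i j ^ n = ∏ _m : Fin n, D i j := by simp
      rw [h0, hD]
      rw [Finset.prod_univ_sum fun _ => (Finset.univ : Finset (Fin d)), Fintype.piFinset_univ]
      exact Finset.sum_congr rfl fun g _ => Finset.prod_mul_distrib
    calc ∑ i, ∑ j, dd i * dd j * ((2 * a * D i j) ^ n / n.factorial)
        = ∑ i, ∑ j, ∑ g : Fin n → Fin d, ((2 * a) ^ n / n.factorial)
            * ((dd i * ∏ m, x i (g m)) * (dd j * ∏ m, x j (g m))) := by
          refine Finset.sum_congr rfl fun i _ => Finset.sum_congr rfl fun j _ => ?_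
          simp only [mul_pow, hDpow, Finset.mul_sum, Finset.sum_div]
          exact Finset.sum_congr rfl fun g _ => by ring
      _ = ∑ g : Fin n → Fin d, ∑ i, ∑ j, ((2 * a) ^ n / n.factorial)
            * ((dd i * ∏ m, x i (g m)) * (dd j * ∏ m, x j (g m))) := by
          rw [Finset.sum_congr rfl fun i (_ : i ∈ Finset.univ) => Finset.sum_comm]
          exact Finset.sum_comm
      _ = u n := by
          rw [hu_apply, Finset.mul_sum]
          refine Finset.sum_congr rfl fun g _ => ?_
          rw [sq, hT_apply, Finset.sum_mul_sum, Finset.mul_sum]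
          exact Finset.sum_congr rfl fun i _ => (Finset.mul_sum _ _ _).symm
  have hQ : (∑ i, ∑ j, dd i * dd j * Real.exp (2 * a * D i j)) = ∑' n, u n := by
    calc ∑ i, ∑ j, dd i * dd j * Real.exp (2 * a * D i j)
        = ∑ i, ∑ j, ∑' n : ℕ, dd i * dd j * ((2 * a * D i j) ^ n / n.factorial) := by
          refine Finset.sum_congr rfl fun i _ => Finset.sum_congr rfl fun j _ => ?_
          rw [hexp (2 * a * D i j), ← tsum_mul_left]
      _ = ∑ i, ∑' n : ℕ, ∑ j, dd i * dd j * ((2 * a * D i j) ^ n / n.factorial) :=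
          Finset.sum_congr rfl fun i _ => (Summable.tsum_finsetSum fun j _ => hsumm i j).symm
      _ = ∑' n : ℕ, ∑ i, ∑ j, dd i * dd j * ((2 * a * D i j) ^ n / n.factorial) :=
          (Summable.tsum_finsetSum fun i _ => summable_sum fun j _ => hsumm i j).symm
      _ = ∑' n, u n := tsum_congr inner
  have hu0 : ∀ n, 0 ≤ u n := by
    intro n
    apply mul_nonneg (by positivity)
    exact Finset.sum_nonneg fun g _ => sq_nonneg _
  have hsu : Summable u := by
    have h := summable_sum (s := (Finset.univ : Finset (Fin N)))
      (fun i _ => summable_sum (s := (Finset.univ : Finset (Fin N))) (fun j _ => hsumm i j))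
    exact h.congr inner
  rw [hQ]
  rcases lt_or_eq_of_le (tsum_nonneg hu0) with hlt | heq
  · exact hlt
  · -- tsum = 0 : derive contradiction
    exfalso
    have hun : ∀ n, u n = 0 := by
      intro n
      have h1 : u n ≤ ∑' n, u n := Summable.le_tsum hsu n fun m _ => hu0 m
      rw [← heq] at h1
      exact le_antisymm h1 (hu0 n)
    have hTn : ∀ (n : ℕ) (g : Fin n → Fin d), ∑ i, dd i * ∏ m, x i (g m) = 0 := by
      intro n g
      have h1 := (hu_apply n).symm.trans (hun n)
      have h2 : (0:ℝ) < (2 * a) ^ n / n.factorial := by positivity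
      have h3 : ∑ g : Fin n → Fin d, (T n g) ^ 2 = 0 := by
        rcases mul_eq_zero.mp h1 with h | h
        · exact absurd h h2.ne'
        · exact h
      have h4 := (Finset.sum_eq_zero_iff_of_nonneg fun g _ => sq_nonneg (T n g)).mp h3
      have h5 := h4 g (Finset.mem_univ g)
      exact pow_eq_zero_iff (two_ne_zero) |>.mp h5
    have hdd0 : ∀ k, dd k = 0 := by
      intro k
      have h := claimD x dd hTn (Finset.univ.erase k)
        (fun j => fun m => x k m - x j m)
        (fun j => -∑ m, x j m * (x k m - x j m)) 0
      simp only [Multiset.map_zero, Multiset.prod_zero, mul_one] at h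
      have hfac : ∀ i j : Fin N,
          ((∑ m, (x k m - x j m) * x i m) + (-∑ m, x j m * (x k m - x j m)))
          = ∑ m, (x i m - x j m) * (x k m - x j m) := by
        intro i j
        rw [← sub_eq_add_neg, ← Finset.sum_sub_distrib]
        exact Finset.sum_congr rfl fun m _ => by ring
      simp_rw [hfac] at h
      have hsingle : ∑ i, dd i * ∏ j ∈ Finset.univ.erase k,
            (∑ m, (x i m - x j m) * (x k m - x j m))
          = dd k * ∏ j ∈ Finset.univ.erase k,
            (∑ m, (x k m - x j m) * (x k m - x j m)) := by
        refine Finset.sum_eq_single_of_mem k (Finset.mem_univ k) ?_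
        intro i _ hik
        have hz : ∏ j ∈ Finset.univ.erase k,
            (∑ m, (x i m - x j m) * (x k m - x j m)) = 0 :=
          Finset.prod_eq_zero (Finset.mem_erase.mpr ⟨hik, Finset.mem_univ i⟩) (by simp)
        rw [hz, mul_zero]
      rw [hsingle] at h
      have hpos : 0 < ∏ j ∈ Finset.univ.erase k,
          (∑ m, (x k m - x j m) * (x k m - x j m)) := by
        refine Finset.prod_pos fun j hj => ?_
        have hjk : x j ≠ x k := fun hh => (Finset.mem_erase.mp hj).1 (hinj hh)
        have hex : ∃ m, x k m - x j m ≠ 0 := by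
          by_contra hcon
          push_neg at hcon
          exact hjk (PiLp.ext fun m => by have := hcon m; linarith)
        obtain ⟨m0, hm0⟩ := hex
        exact Finset.sum_pos' (fun m _ => mul_self_nonneg _)
          ⟨m0, Finset.mem_univ m0, mul_self_pos.mpr hm0⟩
      exact (mul_eq_zero.mp h).resolve_right hpos.ne'
    apply hc
    funext i
    have h := hdd0 i
    rw [hdd_def] at h
    have := Real.exp_ne_zero (-(a * P i))
    exact (mul_eq_zero.mp h).resolve_right this

end comb

section anal
open Real Set MeasureTheory Filter


-- measurability of the basic integrand
lemma contOn_E (b : ℝ) : ContinuousOn (fun v : ℝ => Real.exp (-v ^ 2 - b ^ 2 / v ^ 2)) (Ioi 0) := by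
  apply ContinuousOn.rexp
  apply ContinuousOn.sub (by fun_prop)
  exact ContinuousOn.div continuousOn_const (by fun_prop) (fun v hv => pow_ne_zero 2 (ne_of_gt hv))

lemma integrable_gauss_Ioi : IntegrableOn (fun v : ℝ => Real.exp (-v ^ 2)) (Ioi 0) := by
  have h := (integrable_exp_neg_mul_sq (one_pos)).integrableOn (s := Ioi 0)
  simpa using h

lemma exp_E_le (b v : ℝ) (hv : 0 < v) : Real.exp (-v ^ 2 - b ^ 2 / v ^ 2) ≤ Real.exp (-v ^ 2) := by
  apply Real.exp_le_exp.mpr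
  have : 0 ≤ b ^ 2 / v ^ 2 := by positivity
  linarith

lemma integrableOn_E (b : ℝ) :
    IntegrableOn (fun v : ℝ => Real.exp (-v ^ 2 - b ^ 2 / v ^ 2)) (Ioi 0) := by
  apply Integrable.mono' integrable_gauss_Ioi
    ((contOn_E b).aestronglyMeasurable measurableSet_Ioi)
  filter_upwards [ae_restrict_mem measurableSet_Ioi] with v hv
  rw [Real.norm_eq_abs, abs_of_pos (Real.exp_pos _)]
  exact exp_E_le b v hv

lemma sq_le_two_exp_half (v : ℝ) : v ^ 2 ≤ 2 * Real.exp (v ^ 2 / 2) := by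
  have h := Real.add_one_le_exp (v ^ 2 / 2)
  nlinarith [Real.exp_pos (v ^ 2 / 2)]

lemma sq_mul_exp_le (v : ℝ) : v ^ 2 * Real.exp (-v ^ 2) ≤ 2 * Real.exp (-(1/2) * v ^ 2) := by
  have h := sq_le_two_exp_half v
  calc v ^ 2 * Real.exp (-v ^ 2) ≤ (2 * Real.exp (v ^ 2 / 2)) * Real.exp (-v ^ 2) :=
        mul_le_mul_of_nonneg_right h (Real.exp_pos _).le
    _ = 2 * Real.exp (-(1/2) * v ^ 2) := by
        rw [mul_assoc, ← Real.exp_add]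
        ring_nf

lemma integrableOn_sq_E (b : ℝ) :
    IntegrableOn (fun v : ℝ => v ^ 2 * Real.exp (-v ^ 2 - b ^ 2 / v ^ 2)) (Ioi 0) := by
  have hint : IntegrableOn (fun v : ℝ => 2 * Real.exp (-(1/2) * v ^ 2)) (Ioi 0) :=
    ((integrable_exp_neg_mul_sq (by norm_num : (0:ℝ) < 1/2)).integrableOn).const_mul 2
  apply Integrable.mono' hint
  · exact (continuousOn_pow 2 |>.mul (contOn_E b)).aestronglyMeasurable measurableSet_Ioi
  filter_upwards [ae_restrict_mem measurableSet_Ioi] with v hv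
  rw [Real.norm_eq_abs, abs_of_nonneg (by positivity)]
  calc v ^ 2 * Real.exp (-v ^ 2 - b ^ 2 / v ^ 2) ≤ v ^ 2 * Real.exp (-v ^ 2) := by
        have := exp_E_le b v hv
        nlinarith [sq_nonneg v]
    _ ≤ 2 * Real.exp (-(1/2) * v ^ 2) := sq_mul_exp_le v

lemma integrableOn_inv_sq_E {b : ℝ} (hb : 0 < b) :
    IntegrableOn (fun v : ℝ => (1 / v ^ 2) * Real.exp (-v ^ 2 - b ^ 2 / v ^ 2)) (Ioi 0) := by
  have hint : IntegrableOn (fun v : ℝ => (1 / b ^ 2) * Real.exp (-v ^ 2)) (Ioi 0) :=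
    integrable_gauss_Ioi.const_mul _
  apply Integrable.mono' hint
  · apply ContinuousOn.aestronglyMeasurable _ measurableSet_Ioi
    exact (ContinuousOn.div continuousOn_const (by fun_prop)
      (fun v hv => pow_ne_zero 2 (ne_of_gt hv))).mul (contOn_E b)
  filter_upwards [ae_restrict_mem measurableSet_Ioi] with v hv
  rw [Real.norm_eq_abs, abs_of_nonneg (by positivity)]
  -- (1/v²) e^{-v²-b²/v²} ≤ (1/b²) e^{-v²}  ⟺  (b²/v²) e^{-b²/v²} ≤ 1
  have hv2 : (0:ℝ) < v ^ 2 := pow_pos hv 2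
  have key : (b ^ 2 / v ^ 2) * Real.exp (-(b ^ 2 / v ^ 2)) ≤ 1 := by
    set t := b ^ 2 / v ^ 2 with ht
    have h1 : t ≤ Real.exp t := (Real.add_one_le_exp t).trans' (by linarith)
    have h2 : Real.exp (-t) = (Real.exp t)⁻¹ := Real.exp_neg t
    rw [h2]
    have hp := Real.exp_pos t
    have h3 : t * (Real.exp t)⁻¹ ≤ Real.exp t * (Real.exp t)⁻¹ := by gcongr
    simpa [mul_inv_cancel₀ hp.ne'] using h3
  have hE : Real.exp (-v ^ 2 - b ^ 2 / v ^ 2)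
      = Real.exp (-v ^ 2) * Real.exp (-(b ^ 2 / v ^ 2)) := by
    rw [← Real.exp_add]; ring_nf
  rw [hE]
  have hbpos : (0:ℝ) < b ^ 2 := by positivity
  have h3 : (1 / v ^ 2) * (Real.exp (-v ^ 2) * Real.exp (-(b ^ 2 / v ^ 2)))
      = (1 / b ^ 2) * Real.exp (-v ^ 2) * ((b ^ 2 / v ^ 2) * Real.exp (-(b ^ 2 / v ^ 2))) := by
    field_simp
  rw [h3]
  calc (1 / b ^ 2) * Real.exp (-v ^ 2) * ((b ^ 2 / v ^ 2) * Real.exp (-(b ^ 2 / v ^ 2)))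
      ≤ (1 / b ^ 2) * Real.exp (-v ^ 2) * 1 := by
        apply mul_le_mul_of_nonneg_left key (by positivity)
    _ = (1 / b ^ 2) * Real.exp (-v ^ 2) := mul_one _

/-- substitution v ↦ b / v -/
lemma A2 {b : ℝ} (hb : 0 < b) :
    ∫ v in Ioi (0:ℝ), (b / v ^ 2) * Real.exp (-v ^ 2 - b ^ 2 / v ^ 2)
      = ∫ v in Ioi (0:ℝ), Real.exp (-v ^ 2 - b ^ 2 / v ^ 2) := by
  have himg : (fun v : ℝ => b / v) '' (Ioi 0) = Ioi 0 := by
    apply Set.eq_of_subset_of_subset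
    · rintro y ⟨v, hv, rfl⟩
      exact div_pos hb hv
    · intro y hy
      exact ⟨b / y, div_pos hb hy, by field_simp⟩
  have hderiv : ∀ v ∈ Ioi (0:ℝ),
      HasDerivWithinAt (fun v : ℝ => b / v) (-(b / v ^ 2)) (Ioi 0) v := by
    intro v hv
    have h := ((hasDerivAt_inv (ne_of_gt hv)).const_mul b)
    have h2 : b * -(v ^ 2)⁻¹ = -(b / v ^ 2) := by field_simp
    simpa [div_eq_mul_inv, h2] using h.hasDerivWithinAt
  have hinj : Set.InjOn (fun v : ℝ => b / v) (Ioi 0) := by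
    intro v hv w hw h
    have hv0 : v ≠ 0 := ne_of_gt hv
    have hw0 : w ≠ 0 := ne_of_gt hw
    field_simp at h
    exact h.symm
  have := MeasureTheory.integral_image_eq_integral_abs_deriv_smul measurableSet_Ioi hderiv hinj
    (fun y => Real.exp (-y ^ 2 - b ^ 2 / y ^ 2))
  rw [himg] at this
  rw [this]
  apply setIntegral_congr_fun measurableSet_Ioi
  intro v hv
  have hv0 : v ≠ 0 := ne_of_gt hv
  have habs : |(-(b / v ^ 2))| = b / v ^ 2 := by
    rw [abs_neg, abs_of_pos (by positivity)]
  simp only [smul_eq_mul]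
  rw [habs]
  congr 1
  have hb0 : b ≠ 0 := hb.ne'
  have h1 : -(b / v) ^ 2 - b ^ 2 / (b / v) ^ 2 = -v ^ 2 - b ^ 2 / v ^ 2 := by
    field_simp
    ring
  rw [h1]

/-- substitution w = v - b/v -/
lemma Asub {b : ℝ} (hb : 0 < b) :
    ∫ v in Ioi (0:ℝ), (1 + b / v ^ 2) * Real.exp (-(v - b / v) ^ 2) = Real.sqrt π := by
  have hb0 : b ≠ 0 := hb.ne'
  have himg : (fun v : ℝ => v - b / v) '' (Ioi 0) = Set.univ := by
    apply Set.eq_of_subset_of_subset (Set.subset_univ _)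
    intro y _
    set s := Real.sqrt (y ^ 2 + 4 * b) with hs
    have hs2 : s ^ 2 = y ^ 2 + 4 * b := Real.sq_sqrt (by positivity)
    have hsy : |y| < s := by
      have h1 : Real.sqrt (y ^ 2) < s := Real.sqrt_lt_sqrt (sq_nonneg y) (by linarith)
      rwa [Real.sqrt_sq_eq_abs] at h1
    have hv : (0:ℝ) < (y + s) / 2 := by
      have := neg_abs_le y
      linarith
    refine ⟨(y + s) / 2, hv, ?_⟩
    have hys : y + s ≠ 0 := by
      have := neg_abs_le y
      nlinarith
    show (y + s) / 2 - b / ((y + s) / 2) = y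
    field_simp
    nlinarith [hs2]
  have hderiv : ∀ v ∈ Ioi (0:ℝ),
      HasDerivWithinAt (fun v : ℝ => v - b / v) (1 + b / v ^ 2) (Ioi 0) v := by
    intro v hv
    have h1 : HasDerivAt (fun v : ℝ => b / v) (-(b / v ^ 2)) v := by
      have h := (hasDerivAt_inv (ne_of_gt hv)).const_mul b
      have h2 : b * -(v ^ 2)⁻¹ = -(b / v ^ 2) := by field_simp
      simpa [div_eq_mul_inv, h2] using h
    have h3 := (hasDerivAt_id v).sub h1
    have h4 : (1 : ℝ) - -(b / v ^ 2) = 1 + b / v ^ 2 := by ring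
    rw [h4] at h3
    exact h3.hasDerivWithinAt
  have hinj : Set.InjOn (fun v : ℝ => v - b / v) (Ioi 0) := by
    intro v hv w hw h
    simp only at h
    have hv0 : v ≠ 0 := ne_of_gt hv
    have hw0 : w ≠ 0 := ne_of_gt hw
    have h2 : (v - w) * (v * w + b) = 0 := by
      field_simp at h
      nlinarith [h]
    rcases mul_eq_zero.mp h2 with h3 | h3
    · linarith
    · nlinarith [mul_pos (show (0:ℝ) < v from hv) (show (0:ℝ) < w from hw)]
  have := MeasureTheory.integral_image_eq_integral_abs_deriv_smul measurableSet_Ioi hderiv hinj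
    (fun y => Real.exp (-y ^ 2))
  rw [himg] at this
  rw [Measure.restrict_univ] at this
  have hg : ∫ y : ℝ, Real.exp (-y ^ 2) = Real.sqrt π := by
    have := integral_gaussian 1
    simpa using this
  rw [hg] at this
  rw [this]
  apply setIntegral_congr_fun measurableSet_Ioi
  intro v hv
  have hv0 : v ≠ 0 := ne_of_gt hv
  have habs : |1 + b / v ^ 2| = 1 + b / v ^ 2 := abs_of_pos (by positivity)
  simp only [smul_eq_mul]
  rw [habs]

/-- the Glasser-type integral -/
lemma Ival {b : ℝ} (hb : 0 < b) :
    ∫ v in Ioi (0:ℝ), Real.exp (-v ^ 2 - b ^ 2 / v ^ 2)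
      = Real.sqrt π / 2 * Real.exp (-(2 * b)) := by
  have hb0 : b ≠ 0 := hb.ne'
  have hsq : ∀ v : ℝ, v ≠ 0 → -(v - b / v) ^ 2 = 2 * b + (-v ^ 2 - b ^ 2 / v ^ 2) := by
    intro v hv0
    field_simp
    ring
  have hA := Asub hb
  have hrw : ∫ v in Ioi (0:ℝ), (1 + b / v ^ 2) * Real.exp (-(v - b / v) ^ 2)
      = Real.exp (2 * b) * ((∫ v in Ioi (0:ℝ), Real.exp (-v ^ 2 - b ^ 2 / v ^ 2))
        + ∫ v in Ioi (0:ℝ), (b / v ^ 2) * Real.exp (-v ^ 2 - b ^ 2 / v ^ 2)) := by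
    rw [← MeasureTheory.integral_add (integrableOn_E b) ?hint]
    case hint =>
      have h : IntegrableOn (fun v : ℝ => b * ((1 / v ^ 2) * Real.exp (-v ^ 2 - b ^ 2 / v ^ 2)))
          (Ioi 0) := (integrableOn_inv_sq_E hb).const_mul b
      exact h.congr_fun (fun v hv => by ring) measurableSet_Ioi
    rw [← MeasureTheory.integral_const_mul]
    apply setIntegral_congr_fun measurableSet_Ioi
    intro v hv
    have hv0 : v ≠ 0 := ne_of_gt hv
    simp only
    rw [hsq v hv0, Real.exp_add]
    ring
  rw [hA, A2 hb] at hrw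
  have h2 : Real.exp (2 * b) * (2 * ∫ v in Ioi (0:ℝ), Real.exp (-v ^ 2 - b ^ 2 / v ^ 2))
      = Real.sqrt π := by rw [hrw]; ring
  have hepos := Real.exp_pos (2 * b)
  have : ∫ v in Ioi (0:ℝ), Real.exp (-v ^ 2 - b ^ 2 / v ^ 2)
      = Real.sqrt π / (2 * Real.exp (2 * b)) := by
    field_simp at h2 ⊢
    linarith [h2]
  rw [this, Real.exp_neg]
  field_simp

lemma tendsto_atTop_vE (b : ℝ) :
    Tendsto (fun v : ℝ => v * Real.exp (-v ^ 2 - b ^ 2 / v ^ 2)) atTop (nhds 0) := by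
  apply squeeze_zero' (g := fun v : ℝ => 4 / v)
  · filter_upwards [eventually_ge_atTop (1:ℝ)] with v hv
    positivity
  · filter_upwards [eventually_ge_atTop (1:ℝ)] with v hv
    have hv0 : (0:ℝ) < v := by linarith
    have h := Real.add_one_le_exp (v ^ 2 / 2)
    have h2 : Real.exp (v ^ 2 / 2) * Real.exp (v ^ 2 / 2) = Real.exp (v ^ 2) := by
      rw [← Real.exp_add]; ring_nf
    have h1 : v ^ 4 / 4 ≤ Real.exp (v ^ 2) := by nlinarith [Real.exp_pos (v ^ 2 / 2)]
    have hEle : Real.exp (-v ^ 2 - b ^ 2 / v ^ 2) ≤ (v ^ 4 / 4)⁻¹ := by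
      calc Real.exp (-v ^ 2 - b ^ 2 / v ^ 2) ≤ Real.exp (-v ^ 2) := exp_E_le b v hv0
        _ = (Real.exp (v ^ 2))⁻¹ := Real.exp_neg _
        _ ≤ (v ^ 4 / 4)⁻¹ := by
            apply inv_anti₀ (by positivity) h1
    calc v * Real.exp (-v ^ 2 - b ^ 2 / v ^ 2) ≤ v * (v ^ 4 / 4)⁻¹ :=
          mul_le_mul_of_nonneg_left hEle hv0.le
      _ = 4 / v ^ 3 := by field_simp
      _ ≤ 4 / v := by
          rw [div_le_div_iff₀ (by positivity) hv0]
          nlinarith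
  · exact tendsto_const_nhds.div_atTop tendsto_id

lemma contWithinAt_vE (b : ℝ) :
    ContinuousWithinAt (fun v : ℝ => v * Real.exp (-v ^ 2 - b ^ 2 / v ^ 2)) (Ici 0) 0 := by
  have h0 : (fun v : ℝ => v * Real.exp (-v ^ 2 - b ^ 2 / v ^ 2)) 0 = 0 := by simp
  unfold ContinuousWithinAt
  rw [h0]
  apply squeeze_zero' (g := fun v : ℝ => v)
  · filter_upwards [self_mem_nhdsWithin] with v (hv : v ∈ Ici 0)
    have : (0:ℝ) ≤ v := hv
    positivity
  · filter_upwards [self_mem_nhdsWithin] with v (hv : v ∈ Ici 0)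
    have hv0 : (0:ℝ) ≤ v := hv
    have hle : Real.exp (-v ^ 2 - b ^ 2 / v ^ 2) ≤ 1 := by
      apply Real.exp_le_one_iff.mpr
      have h1 : 0 ≤ b ^ 2 / v ^ 2 := by positivity
      nlinarith
    nlinarith [Real.exp_pos (-v ^ 2 - b ^ 2 / v ^ 2)]
  · exact (continuous_id.tendsto 0).mono_left nhdsWithin_le_nhds

lemma hasDeriv_vE {b : ℝ} (v : ℝ) (hv : 0 < v) :
    HasDerivAt (fun v : ℝ => v * Real.exp (-v ^ 2 - b ^ 2 / v ^ 2))
      ((1 - 2 * v ^ 2 + 2 * b ^ 2 / v ^ 2) * Real.exp (-v ^ 2 - b ^ 2 / v ^ 2)) v := by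
  have hv0 : v ≠ 0 := ne_of_gt hv
  have h1 : HasDerivAt (fun v : ℝ => -v ^ 2 - b ^ 2 / v ^ 2)
      (-(2 * v) - (b ^ 2 * (-(2 * v) / (v ^ 2) ^ 2))) v := by
    have hp : HasDerivAt (fun v : ℝ => v ^ 2) (2 * v) v := by
      simpa using hasDerivAt_pow 2 v
    have hinv : HasDerivAt (fun v : ℝ => (v ^ 2)⁻¹) (-(2 * v) / (v ^ 2) ^ 2) v :=
      hp.inv (pow_ne_zero 2 hv0)
    have hq : HasDerivAt (fun v : ℝ => b ^ 2 / v ^ 2) (b ^ 2 * (-(2 * v) / (v ^ 2) ^ 2)) v := by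
      simpa [div_eq_mul_inv] using hinv.const_mul (b ^ 2)
    exact (hp.neg).sub hq
  have hE := h1.exp
  have hf := (hasDerivAt_id v).mul hE
  simp only [id_eq] at hf
  have heq : 1 * Real.exp (-v ^ 2 - b ^ 2 / v ^ 2)
      + v * (Real.exp (-v ^ 2 - b ^ 2 / v ^ 2) * (-(2 * v) - b ^ 2 * (-(2 * v) / (v ^ 2) ^ 2)))
      = (1 - 2 * v ^ 2 + 2 * b ^ 2 / v ^ 2) * Real.exp (-v ^ 2 - b ^ 2 / v ^ 2) := by
    field_simp
    ring
  rw [heq] at hf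
  exact hf

lemma ftc_E {b : ℝ} (hb : 0 < b) :
    ∫ v in Ioi (0:ℝ),
      (1 - 2 * v ^ 2 + 2 * b ^ 2 / v ^ 2) * Real.exp (-v ^ 2 - b ^ 2 / v ^ 2) = 0 := by
  have hfun : (fun v : ℝ => (1 - 2 * v ^ 2 + 2 * b ^ 2 / v ^ 2) * Real.exp (-v ^ 2 - b ^ 2 / v ^ 2))
      = fun v : ℝ => (Real.exp (-v ^ 2 - b ^ 2 / v ^ 2)
          - 2 * (v ^ 2 * Real.exp (-v ^ 2 - b ^ 2 / v ^ 2)))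
          + 2 * b ^ 2 * ((1 / v ^ 2) * Real.exp (-v ^ 2 - b ^ 2 / v ^ 2)) :=
    funext fun v => by ring
  have hint : IntegrableOn (fun v : ℝ =>
      (1 - 2 * v ^ 2 + 2 * b ^ 2 / v ^ 2) * Real.exp (-v ^ 2 - b ^ 2 / v ^ 2)) (Ioi 0) := by
    rw [hfun]
    exact ((integrableOn_E b).sub ((integrableOn_sq_E b).const_mul 2)).add
      ((integrableOn_inv_sq_E hb).const_mul (2 * b ^ 2))
  have h := MeasureTheory.integral_Ioi_of_hasDerivAt_of_tendsto (a := (0:ℝ)) (m := (0:ℝ))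
    (contWithinAt_vE b) (fun v hv => hasDeriv_vE v hv) hint (tendsto_atTop_vE b)
  simpa using h

lemma Jval {b : ℝ} (hb : 0 < b) :
    ∫ v in Ioi (0:ℝ), v ^ 2 * Real.exp (-v ^ 2 - b ^ 2 / v ^ 2)
      = Real.sqrt π / 4 * (1 + 2 * b) * Real.exp (-(2 * b)) := by
  have hb0 : b ≠ 0 := hb.ne'
  set I := ∫ v in Ioi (0:ℝ), Real.exp (-v ^ 2 - b ^ 2 / v ^ 2) with hI_def
  set J := ∫ v in Ioi (0:ℝ), v ^ 2 * Real.exp (-v ^ 2 - b ^ 2 / v ^ 2) with hJ_def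
  set K := ∫ v in Ioi (0:ℝ), (1 / v ^ 2) * Real.exp (-v ^ 2 - b ^ 2 / v ^ 2) with hK_def
  have hKI : b * K = I := by
    have h1 : ∫ v in Ioi (0:ℝ), (b / v ^ 2) * Real.exp (-v ^ 2 - b ^ 2 / v ^ 2)
        = b * K := by
      rw [hK_def, ← MeasureTheory.integral_const_mul]
      exact setIntegral_congr_fun measurableSet_Ioi fun v hv => by ring
    rw [← h1, A2 hb]
  have hsplit : (0:ℝ) = I - 2 * J + 2 * b ^ 2 * K := by
    have h := ftc_E hb
    have hfun : (fun v : ℝ =>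
        (1 - 2 * v ^ 2 + 2 * b ^ 2 / v ^ 2) * Real.exp (-v ^ 2 - b ^ 2 / v ^ 2))
        = fun v : ℝ => (Real.exp (-v ^ 2 - b ^ 2 / v ^ 2)
            - 2 * (v ^ 2 * Real.exp (-v ^ 2 - b ^ 2 / v ^ 2)))
            + 2 * b ^ 2 * ((1 / v ^ 2) * Real.exp (-v ^ 2 - b ^ 2 / v ^ 2)) :=
      funext fun v => by ring
    rw [hfun] at h
    have hAB : Integrable (fun v : ℝ => Real.exp (-v ^ 2 - b ^ 2 / v ^ 2)
        - 2 * (v ^ 2 * Real.exp (-v ^ 2 - b ^ 2 / v ^ 2))) (volume.restrict (Ioi 0)) :=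
      (integrableOn_E b).sub ((integrableOn_sq_E b).const_mul 2)
    have hC : Integrable (fun v : ℝ =>
        2 * b ^ 2 * ((1 / v ^ 2) * Real.exp (-v ^ 2 - b ^ 2 / v ^ 2)))
        (volume.restrict (Ioi 0)) := (integrableOn_inv_sq_E hb).const_mul (2 * b ^ 2)
    rw [MeasureTheory.integral_add hAB hC] at h
    have hB : Integrable (fun v : ℝ => 2 * (v ^ 2 * Real.exp (-v ^ 2 - b ^ 2 / v ^ 2)))
        (volume.restrict (Ioi 0)) := (integrableOn_sq_E b).const_mul 2
    rw [MeasureTheory.integral_sub (integrableOn_E b) hB] at h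
    rw [MeasureTheory.integral_const_mul, MeasureTheory.integral_const_mul] at h
    rw [← hI_def, ← hJ_def, ← hK_def] at h
    linarith
  have hI := Ival hb
  rw [← hI_def] at hI
  have hKI2 : 2 * b ^ 2 * K = 2 * b * I := by
    rw [← hKI]; ring
  rw [hKI2] at hsplit
  rw [hI] at hsplit
  rw [hJ_def] at *
  linarith [hsplit]

lemma J0val : ∫ v in Ioi (0:ℝ), v ^ 2 * Real.exp (-v ^ 2) = Real.sqrt π / 4 := by
  have hcont : ContinuousWithinAt (fun v : ℝ => v * Real.exp (-v ^ 2)) (Ici 0) 0 :=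
    (Continuous.continuousWithinAt (by fun_prop))
  have hderiv : ∀ v ∈ Ioi (0:ℝ), HasDerivAt (fun v : ℝ => v * Real.exp (-v ^ 2))
      ((1 - 2 * v ^ 2) * Real.exp (-v ^ 2)) v := by
    intro v _
    have hp : HasDerivAt (fun v : ℝ => -v ^ 2) (-(2 * v)) v := by
      simpa [Pi.neg_def] using (hasDerivAt_pow 2 v).neg
    have hE := hp.exp
    have hf := (hasDerivAt_id v).mul hE
    simp only [id_eq] at hf
    have heq : 1 * Real.exp (-v ^ 2) + v * (Real.exp (-v ^ 2) * -(2 * v))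
        = (1 - 2 * v ^ 2) * Real.exp (-v ^ 2) := by ring
    rw [heq] at hf
    exact hf
  have htd : Tendsto (fun v : ℝ => v * Real.exp (-v ^ 2)) atTop (nhds 0) := by
    have := tendsto_atTop_vE 0
    simpa using this
  have hintsq : IntegrableOn (fun v : ℝ => v ^ 2 * Real.exp (-v ^ 2)) (Ioi 0) := by
    have := integrableOn_sq_E 0
    simpa using this
  have hint : IntegrableOn (fun v : ℝ => (1 - 2 * v ^ 2) * Real.exp (-v ^ 2)) (Ioi 0) := by
    have hfun : (fun v : ℝ => (1 - 2 * v ^ 2) * Real.exp (-v ^ 2))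
        = fun v : ℝ => Real.exp (-v ^ 2) - 2 * (v ^ 2 * Real.exp (-v ^ 2)) :=
      funext fun v => by ring
    rw [hfun]
    exact integrable_gauss_Ioi.sub (hintsq.const_mul 2)
  have h := MeasureTheory.integral_Ioi_of_hasDerivAt_of_tendsto (a := (0:ℝ)) (m := (0:ℝ))
    hcont hderiv hint htd
  simp only [zero_mul, sub_zero, zero_sub, mul_zero, neg_zero] at h
  have hfun : (fun v : ℝ => (1 - 2 * v ^ 2) * Real.exp (-v ^ 2))
      = fun v : ℝ => Real.exp (-v ^ 2) - 2 * (v ^ 2 * Real.exp (-v ^ 2)) :=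
    funext fun v => by ring
  rw [hfun] at h
  have hB : Integrable (fun v : ℝ => 2 * (v ^ 2 * Real.exp (-v ^ 2)))
      (volume.restrict (Ioi 0)) := hintsq.const_mul 2
  rw [MeasureTheory.integral_sub integrable_gauss_Ioi hB] at h
  rw [MeasureTheory.integral_const_mul] at h
  have hI0 : ∫ v in Ioi (0:ℝ), Real.exp (-v ^ 2) = Real.sqrt π / 2 := by
    have := integral_gaussian_Ioi 1
    simpa using this
  rw [hI0] at h
  linarith

lemma matern_int {t : ℝ} (ht : 0 ≤ t) :
    (1 + t) * Real.exp (-t)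
      = 4 / Real.sqrt π * ∫ v in Ioi (0:ℝ), v ^ 2 * Real.exp (-v ^ 2 - t ^ 2 / (4 * v ^ 2)) := by
  have hpi : (0:ℝ) < Real.sqrt π := Real.sqrt_pos.mpr Real.pi_pos
  rcases eq_or_lt_of_le ht with h0 | hpos
  · have hfun : (fun v : ℝ => v ^ 2 * Real.exp (-v ^ 2 - t ^ 2 / (4 * v ^ 2)))
        = fun v : ℝ => v ^ 2 * Real.exp (-v ^ 2) := by
      funext v
      rw [← h0]
      norm_num
    rw [hfun, J0val, ← h0]
    field_simp
    simp
  · set b := t / 2 with hb_def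
    have hb : 0 < b := by rw [hb_def]; linarith
    have hfun : (fun v : ℝ => v ^ 2 * Real.exp (-v ^ 2 - t ^ 2 / (4 * v ^ 2)))
        = fun v : ℝ => v ^ 2 * Real.exp (-v ^ 2 - b ^ 2 / v ^ 2) := by
      funext v
      congr 2
      rw [hb_def]
      ring
    rw [hfun, Jval hb, hb_def]
    have h2 : 2 * (t / 2) = t := by ring
    rw [h2]
    field_simp


end anal

open Real Set MeasureTheory Filter

/-- The Matérn 1 kernel `k(x,x') = (1 + ε‖x-x'‖)·exp(-ε‖x-x'‖)` on `ℝ^d`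
is strictly positive definite: for all `N` and pairwise distinct points `x_1, …, x_N`,
the kernel matrix is (symmetric) positive definite. -/
theorem matern1_kernel_strictly_positive_definite
    (ε : ℝ) (hε : 0 < ε) (d N : ℕ)
    (x : Fin N → EuclideanSpace ℝ (Fin d)) (hinj : Function.Injective x) :
    (Matrix.of fun i j =>
      (1 + ε * ‖x i - x j‖) * Real.exp (-(ε * ‖x i - x j‖))).PosDef := by
  classical
  have hpi : (0:ℝ) < Real.sqrt π := Real.sqrt_pos.mpr Real.pi_pos
  rw [Matrix.posDef_iff_dotProduct_mulVec]
  constructor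
  · -- symmetry
    ext i j
    simp only [Matrix.conjTranspose_apply, Matrix.of_apply, star_trivial]
    rw [norm_sub_rev]
  · intro c hc
    have hquad : dotProduct (star c)
        (Matrix.mulVec (Matrix.of fun i j =>
          (1 + ε * ‖x i - x j‖) * Real.exp (-(ε * ‖x i - x j‖))) c)
        = ∑ i, ∑ j, c i * c j
            * ((1 + ε * ‖x i - x j‖) * Real.exp (-(ε * ‖x i - x j‖))) := by
      simp only [dotProduct, Matrix.mulVec, Pi.star_apply, star_trivial,
        Matrix.of_apply]
      refine Finset.sum_congr rfl fun i _ => ?_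
      rw [Finset.mul_sum]
      exact Finset.sum_congr rfl fun j _ => by ring
    rw [hquad]
    -- rewrite each entry as an integral
    have hstep : ∀ i j : Fin N, c i * c j
        * ((1 + ε * ‖x i - x j‖) * Real.exp (-(ε * ‖x i - x j‖)))
        = 4 / Real.sqrt π * ∫ v in Ioi (0:ℝ),
            c i * c j * (v ^ 2
              * Real.exp (-v ^ 2 - (ε * ‖x i - x j‖ / 2) ^ 2 / v ^ 2)) := by
      intro i j
      have ht : 0 ≤ ε * ‖x i - x j‖ := mul_nonneg hε.le (norm_nonneg _)
      have h1 := matern_int ht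
      have hfe : (fun v : ℝ => v ^ 2
          * Real.exp (-v ^ 2 - (ε * ‖x i - x j‖) ^ 2 / (4 * v ^ 2)))
          = fun v : ℝ => v ^ 2
          * Real.exp (-v ^ 2 - (ε * ‖x i - x j‖ / 2) ^ 2 / v ^ 2) := by
        funext v
        congr 2
        ring
      rw [hfe] at h1
      rw [h1, MeasureTheory.integral_const_mul]
      ring
    have hFint : ∀ i j : Fin N, Integrable (fun v : ℝ => c i * c j
        * (v ^ 2 * Real.exp (-v ^ 2 - (ε * ‖x i - x j‖ / 2) ^ 2 / v ^ 2)))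
        (volume.restrict (Ioi 0)) :=
      fun i j => (integrableOn_sq_E (ε * ‖x i - x j‖ / 2)).const_mul (c i * c j)
    have hsum : ∑ i, ∑ j, c i * c j
        * ((1 + ε * ‖x i - x j‖) * Real.exp (-(ε * ‖x i - x j‖)))
        = 4 / Real.sqrt π * ∫ v in Ioi (0:ℝ), ∑ i, ∑ j, c i * c j
            * (v ^ 2 * Real.exp (-v ^ 2 - (ε * ‖x i - x j‖ / 2) ^ 2 / v ^ 2)) := by
      calc ∑ i, ∑ j, c i * c j
          * ((1 + ε * ‖x i - x j‖) * Real.exp (-(ε * ‖x i - x j‖)))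
          = ∑ i, ∑ j, 4 / Real.sqrt π * ∫ v in Ioi (0:ℝ),
              c i * c j * (v ^ 2
                * Real.exp (-v ^ 2 - (ε * ‖x i - x j‖ / 2) ^ 2 / v ^ 2)) :=
          Finset.sum_congr rfl fun i _ => Finset.sum_congr rfl fun j _ => hstep i j
        _ = 4 / Real.sqrt π * ∑ i, ∑ j, ∫ v in Ioi (0:ℝ),
              c i * c j * (v ^ 2
                * Real.exp (-v ^ 2 - (ε * ‖x i - x j‖ / 2) ^ 2 / v ^ 2)) := by
            rw [Finset.mul_sum]
            exact Finset.sum_congr rfl fun i _ => (Finset.mul_sum _ _ _).symm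
        _ = 4 / Real.sqrt π * ∫ v in Ioi (0:ℝ), ∑ i, ∑ j, c i * c j
              * (v ^ 2 * Real.exp (-v ^ 2 - (ε * ‖x i - x j‖ / 2) ^ 2 / v ^ 2)) := by
            congr 1
            rw [MeasureTheory.integral_finset_sum _
              (fun i _ => integrable_finset_sum _ (fun j _ => hFint i j))]
            exact Finset.sum_congr rfl fun i _ =>
              (MeasureTheory.integral_finset_sum _ (fun j _ => hFint i j)).symm
    rw [hsum]
    -- positivity of the integrand
    have hpos : ∀ v ∈ Ioi (0:ℝ), 0 < ∑ i, ∑ j, c i * c j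
        * (v ^ 2 * Real.exp (-v ^ 2 - (ε * ‖x i - x j‖ / 2) ^ 2 / v ^ 2)) := by
      intro v hv
      have hv0 : (0:ℝ) < v := hv
      have ha : 0 < ε ^ 2 / (4 * v ^ 2) := by positivity
      have hG := gauss_pd x hinj ha hc
      have heq : ∑ i, ∑ j, c i * c j
          * (v ^ 2 * Real.exp (-v ^ 2 - (ε * ‖x i - x j‖ / 2) ^ 2 / v ^ 2))
          = v ^ 2 * Real.exp (-v ^ 2) * ∑ i, ∑ j, c i * c j
              * Real.exp (-(ε ^ 2 / (4 * v ^ 2) * ‖x i - x j‖ ^ 2)) := by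
        rw [Finset.mul_sum]
        refine Finset.sum_congr rfl fun i _ => ?_
        rw [Finset.mul_sum]
        refine Finset.sum_congr rfl fun j _ => ?_
        have harg : -v ^ 2 - (ε * ‖x i - x j‖ / 2) ^ 2 / v ^ 2
            = -v ^ 2 + -(ε ^ 2 / (4 * v ^ 2) * ‖x i - x j‖ ^ 2) := by
          ring
        rw [harg, Real.exp_add]
        ring
      rw [heq]
      exact mul_pos (by positivity) hG
    have hH : Integrable (fun v : ℝ => ∑ i, ∑ j, c i * c j
        * (v ^ 2 * Real.exp (-v ^ 2 - (ε * ‖x i - x j‖ / 2) ^ 2 / v ^ 2)))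
        (volume.restrict (Ioi 0)) :=
      integrable_finset_sum _ (fun i _ => integrable_finset_sum _ (fun j _ => hFint i j))
    have hae : 0 ≤ᵐ[volume.restrict (Ioi (0:ℝ))] (fun v : ℝ => ∑ i, ∑ j, c i * c j
        * (v ^ 2 * Real.exp (-v ^ 2 - (ε * ‖x i - x j‖ / 2) ^ 2 / v ^ 2))) := by
      filter_upwards [ae_restrict_mem measurableSet_Ioi] with v hv
      exact (hpos v hv).le
    have hip : 0 < ∫ v in Ioi (0:ℝ), ∑ i, ∑ j, c i * c j
        * (v ^ 2 * Real.exp (-v ^ 2 - (ε * ‖x i - x j‖ / 2) ^ 2 / v ^ 2)) := by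
      rw [MeasureTheory.setIntegral_pos_iff_support_of_nonneg_ae hae hH]
      have hsub : Ioi (0:ℝ) ⊆ Function.support (fun v : ℝ => ∑ i, ∑ j, c i * c j
          * (v ^ 2 * Real.exp (-v ^ 2 - (ε * ‖x i - x j‖ / 2) ^ 2 / v ^ 2))) ∩ Ioi 0 :=
        fun v hv => ⟨(hpos v hv).ne', hv⟩
      calc (0:ENNReal) < volume (Ioi (0:ℝ)) := by simp [Real.volume_Ioi]
        _ ≤ _ := measure_mono hsub
    exact mul_pos (div_pos (by norm_num) hpi) hip
end
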